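/- arXiv:1310.6521 — 3 statements merged into one kernel-verified Lean document; each statement's English description precedes it below -/
import Mathlib

section
/- The equality (P ∩ ℤ³) + ((n−1)P ∩ ℤ³) = (nP) ∩ ℤ³ holds for every lattice 3-polytope P and every n ≥ 4; more precisely, for a lattice polytope P of dimension d, (kP) ∩ ℤᵈ + (P ∩ ℤᵈ) = ((k+1)P) ∩ ℤᵈ for all k ≥ d − 1. -/
open scoped Pointwise

def IsLatticePt {d : ℕ} (x : Fin d → ℝ) : Prop := ∀ i, ∃ z : ℤ, x i = (z : ℝ)

def IsLatticePolytope {d : ℕ} (P : Set (Fin d → ℝ)) : Prop :=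
  ∃ V : Finset (Fin d → ℝ), V.Nonempty ∧ (∀ v ∈ V, IsLatticePt v) ∧ P = convexHull ℝ ↑V

def IsNormalPolytope {d : ℕ} (P : Set (Fin d → ℝ)) : Prop :=
  ∀ n : ℕ, 1 ≤ n → ∀ x ∈ (n : ℝ) • P, IsLatticePt x →
    ∃ f : Fin n → (Fin d → ℝ), (∀ i, f i ∈ P ∧ IsLatticePt (f i)) ∧ x = ∑ i, f i

def P1 : Set (Fin 3 → ℝ) := convexHull ℝ {![0,0,0], ![1,0,0], ![0,1,0], ![0,0,1]}

def dot2 (x y : Fin 2 → ℝ) : ℝ := ∑ i, x i * y i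

def normalCone (P : Set (Fin 2 → ℝ)) (u : Fin 2 → ℝ) : Set (Fin 2 → ℝ) :=
  {y | ∀ x ∈ P, dot2 x y ≤ dot2 u y}

/-- The normal fan of `A` refines the normal fan of `B`: every normal cone of `A`
is contained in some normal cone of `B`. -/
def FanRefines (A B : Set (Fin 2 → ℝ)) : Prop :=
  ∀ u ∈ A, ∃ v ∈ B, normalCone A u ⊆ normalCone B v

/-- At every vertex the primitive edge directions form a ℤ-basis of ℤ². -/
def IsSmoothPolygon (F : Set (Fin 2 → ℝ)) : Prop :=
  ∀ u ∈ Set.extremePoints ℝ F, ∃ m₁ m₂ : Fin 2 → ℤ,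
    (m₁ 0 * m₂ 1 - m₁ 1 * m₂ 0 = 1 ∨ m₁ 0 * m₂ 1 - m₁ 1 * m₂ 0 = -1) ∧
    {y : Fin 2 → ℝ | ∃ t : ℝ, ∃ x ∈ F, 0 ≤ t ∧ y = t • (x - u)} =
      {y : Fin 2 → ℝ | ∃ a b : ℝ, 0 ≤ a ∧ 0 ≤ b ∧
        y = a • (fun i => (m₁ i : ℝ)) + b • (fun i => (m₂ i : ℝ))}

def emb (v : Fin 2 → ℝ) (t : ℝ) : Fin 3 → ℝ := ![v 0, v 1, t]

def cayley (F G : Set (Fin 2 → ℝ)) : Set (Fin 3 → ℝ) :=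
  convexHull ℝ ((fun v => emb v 0) '' F ∪ (fun v => emb v 1) '' G)

section Aux
variable {d : ℕ}

lemma latt_add {x y : Fin d → ℝ} (hx : IsLatticePt x) (hy : IsLatticePt y) :
    IsLatticePt (x + y) := by
  intro i
  obtain ⟨a, ha⟩ := hx i; obtain ⟨b, hb⟩ := hy i
  exact ⟨a + b, by simp [ha, hb]⟩

lemma latt_sub {x y : Fin d → ℝ} (hx : IsLatticePt x) (hy : IsLatticePt y) :
    IsLatticePt (x - y) := by
  intro i
  obtain ⟨a, ha⟩ := hx i; obtain ⟨b, hb⟩ := hy i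
  exact ⟨a - b, by simp [ha, hb]⟩

lemma latt_sum {ι : Type*} (s : Finset ι) (f : ι → Fin d → ℝ)
    (h : ∀ i ∈ s, IsLatticePt (f i)) : IsLatticePt (∑ i ∈ s, f i) := by
  classical
  induction s using Finset.cons_induction with
  | empty => intro i; exact ⟨0, by simp⟩
  | cons a s ha ih =>
      rw [Finset.sum_cons]
      exact latt_add (h a (Finset.mem_cons_self a s))
        (ih fun i hi => h i (Finset.mem_cons_of_mem hi))

/-- homogenized matrix: row `i` is `(w i, 1)`. -/
def matOf {d : ℕ} (w : Fin (d+1) → Fin d → ℝ) : Matrix (Fin (d+1)) (Fin (d+1)) ℝ :=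
  Matrix.of fun i => Fin.snoc (w i) 1

lemma matOf_det_int {w : Fin (d+1) → Fin d → ℝ} (hw : ∀ i, IsLatticePt (w i)) :
    ∃ z : ℤ, (matOf w).det = (z : ℝ) := by
  have h : ∀ i j, ∃ z : ℤ, matOf w i j = (z : ℝ) := by
    intro i j
    refine Fin.lastCases ?_ ?_ j
    · exact ⟨1, by simp [matOf]⟩
    · intro j'
      obtain ⟨z, hz⟩ := hw i j'
      exact ⟨z, by simpa [matOf] using hz⟩
  choose B hB using h
  refine ⟨(Matrix.of B).det, ?_⟩
  have hmap : matOf w = (Matrix.of B).map ((Int.castRingHom ℝ) : ℤ →+* ℝ) := by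
    ext i j; simp [hB i j, Matrix.map_apply]
  rw [hmap]
  exact ((Int.castRingHom ℝ).map_det (Matrix.of B)).symm

lemma matOf_update (w : Fin (d+1) → Fin d → ℝ) (j : Fin (d+1)) (y : Fin d → ℝ) :
    matOf (Function.update w j y) = (matOf w).updateRow j (Fin.snoc y 1) := by
  ext i l
  by_cases h : i = j
  · subst h; simp [matOf]
  · simp [matOf, Matrix.updateRow_ne h, Function.update_of_ne h]

lemma snoc_comb (w : Fin (d+1) → Fin d → ℝ) (ν : Fin (d+1) → ℝ)
    (hν : ∑ i, ν i = 1) :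
    (Fin.snoc (∑ i, ν i • w i) 1 : Fin (d+1) → ℝ) = ∑ i, ν i • (matOf w i) := by
  funext l
  rw [Finset.sum_apply]
  refine Fin.lastCases ?_ ?_ l
  · simpa [matOf] using hν.symm
  · intro l'
    simp [matOf, Finset.sum_apply]
end Aux

section B
variable {d : ℕ} {P : Set (Fin d → ℝ)}

lemma mem_smul_convex (hP : Convex ℝ P) {n : ℕ} {c : Fin n → ℝ} {w : Fin n → Fin d → ℝ}
    (hw : ∀ i, w i ∈ P) (hc : ∀ i, 0 ≤ c i) {s : ℝ} (hs : 0 < s) (hsum : ∑ i, c i = s) :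
    (∑ i, c i • w i) ∈ s • P := by
  rw [Set.mem_smul_set]
  refine ⟨∑ i, (c i / s) • w i, ?_, ?_⟩
  · exact hP.sum_mem (fun i _ => div_nonneg (hc i) hs.le)
      (by rw [← Finset.sum_div, hsum, div_self hs.ne']) (fun i _ => hw i)
  · rw [Finset.smul_sum]
    refine Finset.sum_congr rfl fun i _ => ?_
    rw [smul_smul]
    congr 1
    field_simp
end B

section C
variable {d k : ℕ} {P : Set (Fin d → ℝ)}

/-- Case 1: some coefficient is at least 1. -/
lemma case_one (hconv : Convex ℝ P) {x : Fin d → ℝ} (hx : IsLatticePt x)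
    {w : Fin (d+1) → Fin d → ℝ} {μ : Fin (d+1) → ℝ}
    (hwP : ∀ i, w i ∈ P) (hwL : ∀ i, IsLatticePt (w i)) (hμ0 : ∀ i, 0 ≤ μ i)
    (hsum : ∑ i, μ i = (k : ℝ) + 1) (hrep : x = ∑ i, μ i • w i)
    {j : Fin (d+1)} (hj : 1 ≤ μ j) :
    ∃ a b : Fin d → ℝ,
      (a ∈ (k : ℝ) • P ∧ IsLatticePt a) ∧ (b ∈ P ∧ IsLatticePt b) ∧ x = a + b := by
  classical
  set μ' : Fin (d+1) → ℝ := fun i => if i = j then μ j - 1 else μ i with hμ'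
  have hμ'0 : ∀ i, 0 ≤ μ' i := by
    intro i; simp only [hμ']
    split
    · linarith
    · exact hμ0 i
  have hsum' : ∑ i, μ' i = (k : ℝ) := by
    have h1 : ∀ i, μ' i = μ i + (if i = j then (-1 : ℝ) else 0) := by
      intro i; simp only [hμ']; split <;> rename_i h <;> simp [h] <;> ring
    rw [Finset.sum_congr rfl fun i _ => h1 i, Finset.sum_add_distrib, hsum,
      Finset.sum_ite_eq' Finset.univ j fun _ => (-1 : ℝ)]
    simp
  have hx' : x - w j = ∑ i, μ' i • w i := by
    have h1 : ∀ i, μ' i • w i = μ i • w i + (if i = j then -(w j) else 0) := by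
      intro i; simp only [hμ']
      split <;> rename_i h
      · subst h; rw [sub_smul, one_smul]; abel
      · simp
    rw [Finset.sum_congr rfl fun i _ => h1 i, Finset.sum_add_distrib,
      Finset.sum_ite_eq' Finset.univ j fun _ => -(w j), ← hrep]
    simp [sub_eq_add_neg]
  refine ⟨x - w j, w j, ⟨?_, latt_sub hx (hwL j)⟩, ⟨hwP j, hwL j⟩, by abel⟩
  rcases Nat.eq_zero_or_pos k with hk0 | hkpos
  · subst hk0
    have hall : ∀ i, μ' i = 0 := by
      intro i
      simp only [Nat.cast_zero] at hsum'
      exact (Finset.sum_eq_zero_iff_of_nonneg (fun i (_ : i ∈ Finset.univ) => hμ'0 i)).mp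
        hsum' i (Finset.mem_univ i)
    have : x - w j = 0 := by
      rw [hx']
      exact Finset.sum_eq_zero fun i _ => by rw [hall i, zero_smul]
    rw [this]
    have hPne : P.Nonempty := ⟨w j, hwP j⟩
    rw [show ((0:ℕ):ℝ) = (0:ℝ) by norm_num, Set.zero_smul_set hPne]
    exact Set.zero_mem_zero
  · rw [hx']
    exact mem_smul_convex hconv hwP hμ'0 (by exact_mod_cast hkpos) hsum'

/-- Terminal case: some coefficient vanishes. -/
lemma case_zero_coeff (hconv : Convex ℝ P) (hdk : d ≤ k + 1) {x : Fin d → ℝ}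
    (hx : IsLatticePt x)
    {w : Fin (d+1) → Fin d → ℝ} {μ : Fin (d+1) → ℝ}
    (hwP : ∀ i, w i ∈ P) (hwL : ∀ i, IsLatticePt (w i)) (hμ0 : ∀ i, 0 ≤ μ i)
    (hsum : ∑ i, μ i = (k : ℝ) + 1) (hrep : x = ∑ i, μ i • w i)
    {j : Fin (d+1)} (hj : μ j = 0) :
    ∃ a b : Fin d → ℝ,
      (a ∈ (k : ℝ) • P ∧ IsLatticePt a) ∧ (b ∈ P ∧ IsLatticePt b) ∧ x = a + b := by
  classical
  by_cases h1 : ∃ i, 1 ≤ μ i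
  · obtain ⟨i, hi⟩ := h1
    exact case_one hconv hx hwP hwL hμ0 hsum hrep hi
  push_neg at h1
  exfalso
  have hkd : (d : ℝ) ≤ (k : ℝ) + 1 := by exact_mod_cast hdk
  have hsplit : (k : ℝ) + 1 = ∑ i ∈ Finset.univ.erase j, μ i := by
    rw [← hsum, ← Finset.add_sum_erase Finset.univ μ (Finset.mem_univ j), hj, zero_add]
  rcases Finset.eq_empty_or_nonempty (Finset.univ.erase j) with he | hne
  · rw [he, Finset.sum_empty] at hsplit
    have : (0:ℝ) ≤ (k:ℝ) := Nat.cast_nonneg k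
    linarith
  · have hlt : ∑ i ∈ Finset.univ.erase j, μ i < ∑ i ∈ Finset.univ.erase j, (1:ℝ) :=
      Finset.sum_lt_sum_of_nonempty hne fun i _ => h1 i
    rw [Finset.sum_const, nsmul_eq_mul, mul_one] at hlt
    have hcard : (Finset.univ.erase j).card = d := by
      rw [Finset.card_erase_of_mem (Finset.mem_univ j)]
      simp
    rw [hcard] at hlt
    linarith
end C

section D
variable {d k : ℕ} {P : Set (Fin d → ℝ)}

/-- Degenerate case: det of the homogenized matrix vanishes, so there is an affine
relation; shift coefficients to make one vanish. -/
lemma case_det_zero (hconv : Convex ℝ P) (hdk : d ≤ k + 1) {x : Fin d → ℝ}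
    (hx : IsLatticePt x)
    {w : Fin (d+1) → Fin d → ℝ} {μ : Fin (d+1) → ℝ}
    (hwP : ∀ i, w i ∈ P) (hwL : ∀ i, IsLatticePt (w i)) (hμ0 : ∀ i, 0 ≤ μ i)
    (hsum : ∑ i, μ i = (k : ℝ) + 1) (hrep : x = ∑ i, μ i • w i)
    (hdet : (matOf w).det = 0) :
    ∃ a b : Fin d → ℝ,
      (a ∈ (k : ℝ) • P ∧ IsLatticePt a) ∧ (b ∈ P ∧ IsLatticePt b) ∧ x = a + b := by
  classical
  obtain ⟨v, hv0, hvM⟩ := Matrix.exists_vecMul_eq_zero_iff.mpr hdet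
  have hcol : ∀ l, ∑ i, v i * matOf w i l = 0 := by
    intro l
    have := congrFun hvM l
    simpa [Matrix.vecMul, dotProduct] using this
  have hsumv : ∑ i, v i = 0 := by
    have := hcol (Fin.last d)
    simpa [matOf] using this
  have hvec : ∑ i, v i • w i = 0 := by
    funext l
    rw [Finset.sum_apply]
    have := hcol (Fin.castSucc l)
    simpa [matOf] using this
  -- get an index where v is positive (after a possible sign flip)
  obtain ⟨i₀, hi₀⟩ : ∃ i, v i ≠ 0 := Function.ne_iff.mp hv0
  obtain ⟨u, hu0, husum, huvec⟩ :
      ∃ u : Fin (d+1) → ℝ, 0 < u i₀ ∧ ∑ i, u i = 0 ∧ ∑ i, u i • w i = 0 := by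
    rcases lt_or_gt_of_ne hi₀ with h | h
    · refine ⟨-v, by simpa using h, by simpa using hsumv, ?_⟩
      have : ∑ i, (-v) i • w i = -(∑ i, v i • w i) := by
        rw [← Finset.sum_neg_distrib]
        exact Finset.sum_congr rfl fun i _ => by simp
      rw [this, hvec, neg_zero]
    · exact ⟨v, h, hsumv, hvec⟩
  set s : Finset (Fin (d+1)) := Finset.univ.filter (fun i => 0 < u i) with hs
  have hsne : s.Nonempty := ⟨i₀, by simp [hs, hu0]⟩
  obtain ⟨j, hjs, hjmin⟩ := Finset.exists_min_image s (fun i => μ i / u i) hsne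
  have huj : 0 < u j := (Finset.mem_filter.mp hjs).2
  set t : ℝ := μ j / u j with ht
  have ht0 : 0 ≤ t := div_nonneg (hμ0 j) huj.le
  set μ' : Fin (d+1) → ℝ := fun i => μ i - t * u i with hμ'
  have hμ'j : μ' j = 0 := by
    simp only [hμ', ht]
    field_simp
    ring
  have hμ'0 : ∀ i, 0 ≤ μ' i := by
    intro i
    simp only [hμ']
    by_cases hui : 0 < u i
    · have his : i ∈ s := by simp [hs, hui]
      have := hjmin i his
      rw [ht]
      have h2 : (μ j / u j) * u i ≤ (μ i / u i) * u i :=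
        mul_le_mul_of_nonneg_right this hui.le
      rw [div_mul_cancel₀ _ hui.ne'] at h2
      linarith
    · push_neg at hui
      have : t * u i ≤ 0 := mul_nonpos_of_nonneg_of_nonpos ht0 hui
      have := hμ0 i
      linarith
  have hsum' : ∑ i, μ' i = (k : ℝ) + 1 := by
    simp only [hμ']
    rw [Finset.sum_sub_distrib, hsum, ← Finset.mul_sum, husum, mul_zero, sub_zero]
  have hrep' : x = ∑ i, μ' i • w i := by
    have : ∀ i, μ' i • w i = μ i • w i - t • (u i • w i) := by
      intro i
      simp only [hμ', sub_smul, smul_smul]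
    rw [Finset.sum_congr rfl fun i _ => this i, Finset.sum_sub_distrib,
      ← Finset.smul_sum, huvec, smul_zero, sub_zero, hrep]
  exact case_zero_coeff hconv hdk hx hwP hwL hμ'0 hsum' hrep' hμ'j
end D

section E
variable {d k : ℕ} {P : Set (Fin d → ℝ)}

lemma key (hconv : Convex ℝ P) (hdk : d ≤ k + 1) {x : Fin d → ℝ} (hx : IsLatticePt x) :
    ∀ N : ℕ, ∀ w : Fin (d+1) → Fin d → ℝ, ∀ μ : Fin (d+1) → ℝ,
    (∀ i, w i ∈ P) → (∀ i, IsLatticePt (w i)) → (∀ i, 0 ≤ μ i) →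
    (∑ i, μ i = (k : ℝ) + 1) → (x = ∑ i, μ i • w i) →
    (∀ z : ℤ, (matOf w).det = (z : ℝ) → z.natAbs ≤ N) →
    ∃ a b : Fin d → ℝ,
      (a ∈ (k : ℝ) • P ∧ IsLatticePt a) ∧ (b ∈ P ∧ IsLatticePt b) ∧ x = a + b := by
  classical
  intro N
  induction N with
  | zero =>
      intro w μ hwP hwL hμ0 hsum hrep hN
      obtain ⟨z, hz⟩ := matOf_det_int hwL
      have hz0 : z = 0 := Int.natAbs_eq_zero.mp (Nat.le_zero.mp (hN z hz))
      rw [hz0] at hz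
      exact case_det_zero hconv hdk hx hwP hwL hμ0 hsum hrep (by simpa using hz)
  | succ N ih =>
      intro w μ hwP hwL hμ0 hsum hrep hN
      -- easy cases first
      by_cases h1 : ∃ j, 1 ≤ μ j
      · obtain ⟨j, hj⟩ := h1
        exact case_one hconv hx hwP hwL hμ0 hsum hrep hj
      push_neg at h1
      by_cases h0 : ∃ j, μ j = 0
      · obtain ⟨j, hj⟩ := h0
        exact case_zero_coeff hconv hdk hx hwP hwL hμ0 hsum hrep hj
      push_neg at h0
      obtain ⟨z, hz⟩ := matOf_det_int hwL
      by_cases hz0 : z = 0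
      · rw [hz0] at hz
        exact case_det_zero hconv hdk hx hwP hwL hμ0 hsum hrep (by simpa using hz)
      -- the descent case: all 0 < μ i < 1
      have hμpos : ∀ i, 0 < μ i := fun i => (hμ0 i).lt_of_ne' (h0 i)
      -- k + 1 = d
      have hdr : ((d : ℝ) + 1) = ∑ i : Fin (d+1), (1 : ℝ) := by simp
      have hlt : (k : ℝ) + 1 < (d : ℝ) + 1 := by
        rw [← hsum, hdr]
        exact Finset.sum_lt_sum_of_nonempty Finset.univ_nonempty fun i _ => h1 i
      have hkd : (k : ℝ) + 1 = (d : ℝ) := by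
        have h2 : (k : ℝ) < (d : ℝ) := by linarith
        have h3 : k < d := by exact_mod_cast h2
        have h4 : d ≤ k + 1 := hdk
        have : d = k + 1 := le_antisymm h4 h3
        rw [this]; push_cast; ring
      set ν : Fin (d+1) → ℝ := fun i => 1 - μ i with hν
      have hν0 : ∀ i, 0 < ν i := fun i => by simp only [hν]; linarith [h1 i]
      have hνsum : ∑ i, ν i = 1 := by
        simp only [hν]
        rw [Finset.sum_sub_distrib, hsum, ← hdr, hkd]
        ring
      set y : Fin d → ℝ := ∑ i, ν i • w i with hy
      have hyP : y ∈ P :=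
        hconv.sum_mem (fun i _ => (hν0 i).le) hνsum (fun i _ => hwP i)
      have hyL : IsLatticePt y := by
        have h5 : y = (∑ i, w i) - x := by
          rw [hy, hrep, ← Finset.sum_sub_distrib]
          exact Finset.sum_congr rfl fun i _ => by
            simp only [hν, sub_smul, one_smul]
        rw [h5]
        exact latt_sub (latt_sum Finset.univ w fun i _ => hwL i) hx
      -- pick the minimizer of μ i / ν i
      obtain ⟨j, -, hjmin⟩ :=
        Finset.exists_min_image Finset.univ (fun i => μ i / ν i) Finset.univ_nonempty
      set r : ℝ := μ j / ν j with hr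
      have hr0 : 0 ≤ r := div_nonneg (hμ0 j) (hν0 j).le
      have hrν : r * ν j = μ j := div_mul_cancel₀ _ (hν0 j).ne'
      set w' : Fin (d+1) → Fin d → ℝ := Function.update w j y with hw'
      set μ' : Fin (d+1) → ℝ := fun i => if i = j then r else μ i - r * ν i with hμ'
      have hw'P : ∀ i, w' i ∈ P := by
        intro i; simp only [hw', Function.update_apply]; split
        · exact hyP
        · exact hwP i
      have hw'L : ∀ i, IsLatticePt (w' i) := by
        intro i; simp only [hw', Function.update_apply]; split
        · exact hyL
        · exact hwL i
      have hμ'0 : ∀ i, 0 ≤ μ' i := by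
        intro i; simp only [hμ']; split
        · exact hr0
        · have h6 : r ≤ μ i / ν i := hjmin i (Finset.mem_univ i)
          have h7 : r * ν i ≤ (μ i / ν i) * ν i := mul_le_mul_of_nonneg_right h6 (hν0 i).le
          rw [div_mul_cancel₀ _ (hν0 i).ne'] at h7
          linarith
      have h9 : μ' j • w' j = r • y := by simp [hμ', hw']
      have h10 : ∑ i ∈ Finset.univ.erase j, μ' i • w' i
          = ∑ i ∈ Finset.univ.erase j, (μ i • w i - (r * ν i) • w i) := by
        refine Finset.sum_congr rfl fun i hi => ?_
        have hij : i ≠ j := Finset.ne_of_mem_erase hi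
        simp [hμ', hw', hij, Function.update_of_ne hij, sub_smul]
      have h11 : r • y = ∑ i, (r * ν i) • w i := by
        rw [hy, Finset.smul_sum]
        exact Finset.sum_congr rfl fun i _ => smul_smul r (ν i) (w i)
      have h12 : (r * ν j) • w j + ∑ i ∈ Finset.univ.erase j, (r * ν i) • w i
          = ∑ i, (r * ν i) • w i :=
        Finset.add_sum_erase Finset.univ (fun i => (r * ν i) • w i) (Finset.mem_univ j)
      have h13 : μ j • w j + ∑ i ∈ Finset.univ.erase j, μ i • w i = ∑ i, μ i • w i :=
        Finset.add_sum_erase Finset.univ (fun i => μ i • w i) (Finset.mem_univ j)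
      have e1 : ∑ i ∈ Finset.univ.erase j, μ i = ((k:ℝ)+1) - μ j := by
        have h14 : μ j + ∑ i ∈ Finset.univ.erase j, μ i = ∑ i, μ i :=
          Finset.add_sum_erase _ _ (Finset.mem_univ j)
        rw [hsum] at h14; linarith
      have e2 : ∑ i ∈ Finset.univ.erase j, ν i = 1 - ν j := by
        have h15 : ν j + ∑ i ∈ Finset.univ.erase j, ν i = ∑ i, ν i :=
          Finset.add_sum_erase _ _ (Finset.mem_univ j)
        rw [hνsum] at h15; linarith
      have hsum' : ∑ i, μ' i = (k : ℝ) + 1 := by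
        have h8 : μ' j + ∑ i ∈ Finset.univ.erase j, μ' i = ∑ i, μ' i :=
          Finset.add_sum_erase _ _ (Finset.mem_univ j)
        have h9' : μ' j = r := by simp [hμ']
        have h10' : ∑ i ∈ Finset.univ.erase j, μ' i
            = ∑ i ∈ Finset.univ.erase j, (μ i - r * ν i) := by
          refine Finset.sum_congr rfl fun i hi => ?_
          have hij : i ≠ j := Finset.ne_of_mem_erase hi
          simp [hμ', hij]
        rw [← h8, h9', h10', Finset.sum_sub_distrib, ← Finset.mul_sum, e1, e2]
        linear_combination hrν
      have hrep' : x = ∑ i, μ' i • w' i := by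
        have h8 : μ' j • w' j + ∑ i ∈ Finset.univ.erase j, μ' i • w' i
            = ∑ i, μ' i • w' i :=
          Finset.add_sum_erase Finset.univ (fun i => μ' i • w' i) (Finset.mem_univ j)
        rw [← h8, h9, h10, h11, ← h12, hrν, Finset.sum_sub_distrib, hrep, ← h13]
        abel
      have hdet' : (matOf w').det = ν j * (matOf w).det := by
        have hsnoc : (Fin.snoc y 1 : Fin (d+1) → ℝ) = ∑ i, ν i • (matOf w i) := by
          rw [hy]; exact snoc_comb w ν hνsum
        rw [hw', matOf_update, hsnoc, Matrix.det_updateRow_sum]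
        simp [smul_eq_mul]
      apply ih w' μ' hw'P hw'L hμ'0 hsum' hrep'
      intro z' hz'
      have hzz' : (z' : ℝ) = ν j * (z : ℝ) := by rw [← hz, ← hdet', hz']
      have hν1 : ν j < 1 := by simp only [hν]; linarith [hμpos j]
      have hzabs : (0:ℝ) < |(z:ℝ)| := abs_pos.mpr (by exact_mod_cast hz0)
      have habs : |(z' : ℝ)| < |(z : ℝ)| := by
        rw [hzz', abs_mul, abs_of_pos (hν0 j)]
        nlinarith
      have hcast : (z'.natAbs : ℝ) < (z.natAbs : ℝ) := by
        rw [Nat.cast_natAbs, Nat.cast_natAbs, Int.cast_abs, Int.cast_abs]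
        exact habs
      have hlt : z'.natAbs < z.natAbs := by exact_mod_cast hcast
      have := hN z hz
      omega
end E

lemma sum_dite_fin {M : Type*} [AddCommMonoid M] {m d : ℕ} (hm : m ≤ d + 1) (g : Fin m → M) :
    ∑ i : Fin (d+1), (if h : (i : ℕ) < m then g ⟨i, h⟩ else 0) = ∑ i : Fin m, g i := by
  have h1 : ∑ i : Fin (d+1), (if h : (i : ℕ) < m then g ⟨i, h⟩ else 0)
      = ∑ i ∈ Finset.range (d+1), (if h : i < m then g ⟨i, h⟩ else 0) :=
    Fin.sum_univ_eq_sum_range (fun i => if h : i < m then g ⟨i, h⟩ else 0) (d+1)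
  have h2 : ∑ i : Fin m, g i = ∑ i ∈ Finset.range m, (if h : i < m then g ⟨i, h⟩ else 0) := by
    rw [← Fin.sum_univ_eq_sum_range (fun i => if h : i < m then g ⟨i, h⟩ else 0) m]
    exact Finset.sum_congr rfl fun i _ => by rw [dif_pos i.isLt]
  rw [h1, h2]
  symm
  apply Finset.sum_subset (Finset.range_subset_range.mpr hm)
  intro i _ hi2
  rw [Finset.mem_range] at hi2
  rw [dif_neg hi2]


/-- Ewald–Wessels/Nakagawa: for a lattice `d`-polytope, `kP ∩ ℤᵈ + P ∩ ℤᵈ = (k+1)P ∩ ℤᵈ`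
for all `k ≥ d - 1`. -/
theorem stmt9 (d : ℕ) (P : Set (Fin d → ℝ)) (hP : IsLatticePolytope P)
    (hdim : (interior P).Nonempty) (k : ℕ) (hk : d - 1 ≤ k) :
    {x : Fin d → ℝ | x ∈ ((k : ℝ) + 1) • P ∧ IsLatticePt x} =
      {x : Fin d → ℝ | ∃ a b : Fin d → ℝ,
        (a ∈ (k : ℝ) • P ∧ IsLatticePt a) ∧ (b ∈ P ∧ IsLatticePt b) ∧ x = a + b} := by
  classical
  obtain ⟨V, hVne, hVlat, hPV⟩ := hP
  have hconv : Convex ℝ P := hPV ▸ convex_convexHull ℝ _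
  have hdk : d ≤ k + 1 := by omega
  ext x
  simp only [Set.mem_setOf_eq]
  constructor
  · rintro ⟨hxP, hxL⟩
    obtain ⟨p, hpP, hpx⟩ := Set.mem_smul_set.mp hxP
    have hp' : p ∈ convexHull ℝ (↑V : Set (Fin d → ℝ)) := hPV ▸ hpP
    rw [convexHull_eq_union] at hp'
    simp only [Set.mem_iUnion] at hp'
    obtain ⟨t, htV, hai, hpt⟩ := hp'
    have hcard : t.card ≤ d + 1 := by
      have h1 := hai.card_le_finrank_succ
      rw [Fintype.card_coe] at h1
      refine h1.trans ?_
      have h2 : Module.finrank ℝ (vectorSpan ℝ (Set.range ((↑) : ↥t → (Fin d → ℝ))))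
          ≤ Module.finrank ℝ (Fin d → ℝ) := (vectorSpan ℝ _).finrank_le
      rw [Module.finrank_fin_fun] at h2
      omega
    have htne : t.Nonempty := by
      rcases Finset.eq_empty_or_nonempty t with h | h
      · exfalso; rw [h] at hpt; simp at hpt
      · exact h
    rw [Finset.convexHull_eq] at hpt
    obtain ⟨c, hc0, hc1, hcc⟩ := hpt
    rw [Finset.centerMass_eq_of_sum_1 _ _ hc1] at hcc
    simp only [id] at hcc
    set m := t.card with hmdef
    have hm0 : 0 < m := htne.card_pos
    set e : Fin m ≃ {x // x ∈ t} :=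
      (finCongr (Fintype.card_coe t).symm).trans (Fintype.equivFin ↥t).symm with he
    set q : Fin (d+1) → (Fin d → ℝ) := fun i =>
      if h : (i : ℕ) < m then (e ⟨i, h⟩ : Fin d → ℝ) else (e ⟨0, hm0⟩ : Fin d → ℝ) with hq
    set μ : Fin (d+1) → ℝ := fun i =>
      if h : (i : ℕ) < m then ((k : ℝ) + 1) * c (e ⟨i, h⟩) else 0 with hμ
    have hmemP : ∀ a : {x // x ∈ t}, (a : Fin d → ℝ) ∈ P := by
      intro a
      rw [hPV]
      exact subset_convexHull ℝ (↑V : Set (Fin d → ℝ)) (htV a.2)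
    have hqP : ∀ i, q i ∈ P := by
      intro i; simp only [hq]; split
      · exact hmemP _
      · exact hmemP _
    have hqL : ∀ i, IsLatticePt (q i) := by
      intro i; simp only [hq]; split
      · exact hVlat _ (htV (e _).2)
      · exact hVlat _ (htV (e _).2)
    have hμ0 : ∀ i, 0 ≤ μ i := by
      intro i; simp only [hμ]; split
      · have : (0:ℝ) < (k:ℝ) + 1 := by positivity
        exact mul_nonneg this.le (hc0 _ (e _).2)
      · exact le_refl _
    have s1 : ∑ i, μ i = ∑ i : Fin m, (((k:ℝ)+1) * c (e i)) :=
      sum_dite_fin hcard (fun i => ((k:ℝ)+1) * c (e i))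
    have s2 : ∑ i : Fin m, (((k:ℝ)+1) * c (e i))
        = ∑ a : {x // x ∈ t}, (((k:ℝ)+1) * c (a : Fin d → ℝ)) :=
      Equiv.sum_comp e (fun a => ((k:ℝ)+1) * c (a : Fin d → ℝ))
    have s3 : ∑ a : {x // x ∈ t}, (((k:ℝ)+1) * c (a : Fin d → ℝ))
        = ∑ y ∈ t, (((k:ℝ)+1) * c y) :=
      Finset.sum_coe_sort t (fun y => ((k:ℝ)+1) * c y)
    have hμsum : ∑ i, μ i = (k:ℝ) + 1 := by
      rw [s1, s2, s3, ← Finset.mul_sum, hc1, mul_one]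
    have v1 : ∑ i, μ i • q i
        = ∑ i : Fin (d+1), (if h : (i:ℕ) < m then
            (((k:ℝ)+1) * c ((e ⟨i,h⟩ : {x // x ∈ t}) : Fin d → ℝ)) • ((e ⟨i,h⟩ : {x // x ∈ t}) : Fin d → ℝ) else 0) :=
      Finset.sum_congr rfl fun i _ => by
        by_cases h : (i:ℕ) < m
        · simp only [hμ, hq, dif_pos h]
        · simp only [hμ, hq, dif_neg h, zero_smul]
    have v2 : ∑ i : Fin (d+1), (if h : (i:ℕ) < m then
            (((k:ℝ)+1) * c ((e ⟨i,h⟩ : {x // x ∈ t}) : Fin d → ℝ)) • ((e ⟨i,h⟩ : {x // x ∈ t}) : Fin d → ℝ) else 0)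
        = ∑ i : Fin m, (((k:ℝ)+1) * c ((e i : {x // x ∈ t}) : Fin d → ℝ)) • ((e i : {x // x ∈ t}) : Fin d → ℝ) :=
      sum_dite_fin hcard (fun i => (((k:ℝ)+1) * c ((e i : {x // x ∈ t}) : Fin d → ℝ)) • ((e i : {x // x ∈ t}) : Fin d → ℝ))
    have v3 : ∑ i : Fin m, (((k:ℝ)+1) * c ((e i : {x // x ∈ t}) : Fin d → ℝ)) • ((e i : {x // x ∈ t}) : Fin d → ℝ)
        = ∑ a : {x // x ∈ t}, (((k:ℝ)+1) * c (a : Fin d → ℝ)) • (a : Fin d → ℝ) :=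
      Equiv.sum_comp e (fun a : {x // x ∈ t} => (((k:ℝ)+1) * c (a : Fin d → ℝ)) • (a : Fin d → ℝ))
    have v4 : ∑ a : {x // x ∈ t}, (((k:ℝ)+1) * c (a : Fin d → ℝ)) • (a : Fin d → ℝ)
        = ∑ y ∈ t, (((k:ℝ)+1) * c y) • y :=
      Finset.sum_coe_sort t (fun y => (((k:ℝ)+1) * c y) • y)
    have v5 : ∑ y ∈ t, (((k:ℝ)+1) * c y) • y = ((k:ℝ)+1) • ∑ y ∈ t, c y • y := by
      rw [Finset.smul_sum]
      exact Finset.sum_congr rfl fun y _ => (smul_smul _ _ _).symm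
    have hrep : x = ∑ i, μ i • q i := by
      rw [v1, v2, v3, v4, v5, hcc, hpx]
    obtain ⟨z, hz⟩ := matOf_det_int hqL
    refine key hconv hdk hxL z.natAbs q μ hqP hqL hμ0 hμsum hrep ?_
    intro z' hz'
    have hzz : (z' : ℝ) = (z : ℝ) := by rw [← hz, ← hz']
    have : z' = z := by exact_mod_cast hzz
    simp [this]
  · rintro ⟨a, b, ⟨haP, haL⟩, ⟨hbP, hbL⟩, rfl⟩
    refine ⟨?_, latt_add haL hbL⟩
    obtain ⟨p, hpP, hpa⟩ := Set.mem_smul_set.mp haP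
    have hk1 : (0:ℝ) < (k:ℝ) + 1 := by positivity
    rw [Set.mem_smul_set]
    refine ⟨((k:ℝ)/((k:ℝ)+1)) • p + (1/((k:ℝ)+1)) • b, ?_, ?_⟩
    · refine hconv hpP hbP (by positivity) (by positivity) ?_
      field_simp
    · rw [smul_add, smul_smul, smul_smul]
      have e1 : ((k:ℝ)+1) * ((k:ℝ)/((k:ℝ)+1)) = (k:ℝ) := by field_simp
      have e2 : ((k:ℝ)+1) * (1/((k:ℝ)+1)) = 1 := by field_simp
      rw [e1, e2, one_smul, hpa]
end

section
/- The polytope 4P₁ ∩ {0 ≤ x ≤ 2}, i.e., Conv{(0,0,0),(2,0,0),(0,4,0),(0,0,4),(2,2,0),(2,0,2)}, has exactly one interior lattice point, namely (1,1,1), and is normal. -/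
open scoped Pointwise

def Hset : Set (Fin 3 → ℝ) :=
  {x | 0 ≤ x 0 ∧ x 0 ≤ 2 ∧ 0 ≤ x 1 ∧ 0 ≤ x 2 ∧ x 0 + x 1 + x 2 ≤ 4}


lemma finmk0 (h : 0 < 3) : (⟨0, h⟩ : Fin 3) = 0 := rfl
lemma finmk1 (h : 1 < 3) : (⟨1, h⟩ : Fin 3) = 1 := rfl
lemma finmk2 (h : 2 < 3) : (⟨2, h⟩ : Fin 3) = 2 := rfl

lemma vec6_2 {A : Type*} (a b c d e f : A) : ![a,b,c,d,e,f] 2 = c := rfl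
lemma vec6_3 {A : Type*} (a b c d e f : A) : ![a,b,c,d,e,f] 3 = d := rfl
lemma vec6_4 {A : Type*} (a b c d e f : A) : ![a,b,c,d,e,f] 4 = e := rfl
lemma vec6_5 {A : Type*} (a b c d e f : A) : ![a,b,c,d,e,f] 5 = f := rfl

lemma convex_H : Convex ℝ Hset := by
  intro x hx y hy a b ha hb hab
  obtain ⟨h1,h2,h3,h4,h5⟩ := hx
  obtain ⟨g1,g2,g3,g4,g5⟩ := hy
  have e : ∀ j, (a • x + b • y) j = a * x j + b * y j := fun j => rfl
  refine ⟨?_,?_,?_,?_,?_⟩ <;> simp only [e] <;> nlinarith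

lemma Q_sub_H : convexHull ℝ {![0,0,0], ![2,0,0], ![0,4,0], ![0,0,4], ![2,2,0], ![2,0,2]} ⊆ Hset := by
  apply convexHull_min _ convex_H
  intro v hv
  simp only [Set.mem_insert_iff, Set.mem_singleton_iff] at hv
  rcases hv with rfl|rfl|rfl|rfl|rfl|rfl <;> refine ⟨?_,?_,?_,?_,?_⟩ <;> norm_num [Matrix.cons_val_two, Matrix.tail_cons, Matrix.head_cons]

set_option maxHeartbeats 1000000 in
lemma H_sub_Q : Hset ⊆ convexHull ℝ {![0,0,0], ![2,0,0], ![0,4,0], ![0,0,4], ![2,2,0], ![2,0,2]} := by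
  intro x hx
  obtain ⟨h1,h2,h3,h4,h5⟩ := hx
  rw [convexHull_eq]
  have hne : (4:ℝ) - x 0 ≠ 0 := by linarith
  have hs0 : (0:ℝ) < 4 - x 0 := by linarith
  refine ⟨Fin 6, Finset.univ,
    ![(4 - x 0 - x 1 - x 2)/(4 - x 0) * (1 - x 0 / 2),
      (4 - x 0 - x 1 - x 2)/(4 - x 0) * (x 0 / 2),
      x 1/(4 - x 0) * (1 - x 0 / 2),
      x 1/(4 - x 0) * (x 0 / 2),
      x 2/(4 - x 0) * (1 - x 0 / 2),
      x 2/(4 - x 0) * (x 0 / 2)],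
    ![![0,0,0], ![2,0,0], ![0,4,0], ![2,2,0], ![0,0,4], ![2,0,2]], ?_, ?_, ?_, ?_⟩
  · intro i _
    have e1 : (0:ℝ) ≤ (4 - x 0 - x 1 - x 2)/(4 - x 0) := by
      apply div_nonneg _ hs0.le; linarith
    have e2 : (0:ℝ) ≤ x 1/(4 - x 0) := div_nonneg h3 hs0.le
    have e3 : (0:ℝ) ≤ x 2/(4 - x 0) := div_nonneg h4 hs0.le
    have e4 : (0:ℝ) ≤ 1 - x 0 / 2 := by linarith
    have e5 : (0:ℝ) ≤ x 0 / 2 := by linarith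
    fin_cases i <;>
      simp only [Matrix.cons_val_zero, Matrix.cons_val_one, Matrix.head_cons,
        vec6_2, vec6_3, vec6_4, vec6_5] <;>
      exact mul_nonneg (by assumption) (by assumption)
  · simp only [Fin.sum_univ_six, Matrix.cons_val_zero, Matrix.cons_val_one, Matrix.head_cons,
      vec6_2, vec6_3, vec6_4, vec6_5]
    field_simp
    ring
  · intro i _
    fin_cases i <;>
      simp only [Matrix.cons_val_zero, Matrix.cons_val_one, Matrix.head_cons,
        vec6_2, vec6_3, vec6_4, vec6_5, Set.mem_insert_iff, Set.mem_singleton_iff] <;> tauto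
  · rw [Finset.centerMass_eq_of_sum_1]
    · funext j
      rw [Finset.sum_apply]
      fin_cases j <;>
        simp only [Fin.sum_univ_six, Matrix.cons_val_zero, Matrix.cons_val_one, Matrix.head_cons,
          vec6_2, vec6_3, vec6_4, vec6_5, Pi.smul_apply, smul_eq_mul, finmk0, finmk1, finmk2,
          Matrix.cons_val_two, Matrix.tail_cons] <;>
        · field_simp
          ring
    · simp only [Fin.sum_univ_six, Matrix.cons_val_zero, Matrix.cons_val_one, Matrix.head_cons,
        vec6_2, vec6_3, vec6_4, vec6_5]
      field_simp
      ring

lemma Q_eq_H :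
    (convexHull ℝ {![0,0,0], ![2,0,0], ![0,4,0], ![0,0,4], ![2,2,0], ![2,0,2]} :
      Set (Fin 3 → ℝ)) = Hset :=
  le_antisymm Q_sub_H H_sub_Q

def Oset : Set (Fin 3 → ℝ) :=
  {x | 0 < x 0 ∧ x 0 < 2 ∧ 0 < x 1 ∧ 0 < x 2 ∧ x 0 + x 1 + x 2 < 4}

lemma isOpen_O : IsOpen Oset := by
  have c0 : Continuous fun x : Fin 3 → ℝ => x 0 := continuous_apply 0
  have c1 : Continuous fun x : Fin 3 → ℝ => x 1 := continuous_apply 1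
  have c2 : Continuous fun x : Fin 3 → ℝ => x 2 := continuous_apply 2
  exact (isOpen_lt continuous_const c0).and ((isOpen_lt c0 continuous_const).and
    ((isOpen_lt continuous_const c1).and ((isOpen_lt continuous_const c2).and
      (isOpen_lt ((c0.add c1).add c2) continuous_const))))

lemma interior_Q :
    interior (convexHull ℝ {![0,0,0], ![2,0,0], ![0,4,0], ![0,0,4], ![2,2,0], ![2,0,2]} :
      Set (Fin 3 → ℝ)) = Oset := by
  rw [Q_eq_H]
  apply subset_antisymm
  · intro x hx
    rw [mem_interior_iff_mem_nhds, Metric.mem_nhds_iff] at hx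
    obtain ⟨ε, hε, hball⟩ := hx
    have key : ∀ v : Fin 3 → ℝ, (∀ i, |v i| ≤ 1) → (fun i => x i + ε/2 * v i) ∈ Hset := by
      intro v hv
      apply hball
      rw [Metric.mem_ball, dist_pi_lt_iff hε]
      intro b
      rw [Real.dist_eq]
      have : x b + ε/2 * v b - x b = ε/2 * v b := by ring
      rw [this, abs_mul, abs_of_pos (by positivity : (0:ℝ) < ε/2)]
      calc ε/2 * |v b| ≤ ε/2 * 1 := by
            apply mul_le_mul_of_nonneg_left (hv b) (by positivity)
        _ < ε := by linarith
    have k1 := key ![-1,0,0] (by intro i; fin_cases i <;> norm_num)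
    have k2 := key ![1,0,0] (by intro i; fin_cases i <;> norm_num)
    have k3 := key ![0,-1,0] (by intro i; fin_cases i <;> norm_num)
    have k4 := key ![0,0,-1] (by intro i; fin_cases i <;> norm_num)
    have k5 := key ![1,1,1] (by intro i; fin_cases i <;> norm_num)
    simp only [Hset, Set.mem_setOf_eq, Matrix.cons_val_zero, Matrix.cons_val_one,
      Matrix.head_cons, Matrix.cons_val_two, Matrix.tail_cons] at k1 k2 k3 k4 k5
    obtain ⟨a1,-,-,-,-⟩ := k1
    obtain ⟨-,a2,-,-,-⟩ := k2
    obtain ⟨-,-,a3,-,-⟩ := k3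
    obtain ⟨-,-,-,a4,-⟩ := k4
    obtain ⟨-,-,-,-,a5⟩ := k5
    refine ⟨by linarith, by linarith, by linarith, by linarith, by linarith⟩
  · refine interior_maximal ?_ isOpen_O
    intro y hy
    exact ⟨hy.1.le, hy.2.1.le, hy.2.2.1.le, hy.2.2.2.1.le, hy.2.2.2.2.le⟩

def okQ (p : ℤ × ℤ × ℤ) : Prop :=
  0 ≤ p.1 ∧ p.1 ≤ 2 ∧ 0 ≤ p.2.1 ∧ 0 ≤ p.2.2 ∧ p.1 + p.2.1 + p.2.2 ≤ 4

lemma greedy (m : ℕ) : ∀ a b c : ℤ, 0 ≤ a → a ≤ 2*(m+1) → 0 ≤ b → 0 ≤ c →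
    a + b + c ≤ 4*(m+1) →
    ∃ f : Fin (m+1) → ℤ × ℤ × ℤ, (∀ i, okQ (f i)) ∧
      (∑ i, (f i).1 = a ∧ ∑ i, (f i).2.1 = b ∧ ∑ i, (f i).2.2 = c) := by
  induction m with
  | zero =>
    intro a b c h1 h2 h3 h4 h5
    refine ⟨fun _ => (a,b,c), ?_, ?_, ?_, ?_⟩ <;>
      simp [okQ, Fin.sum_univ_one] <;> omega
  | succ m ih =>
    intro a b c h1 h2 h3 h4 h5
    push_cast at h2 h5
    -- greedy head
    set y0 : ℤ := min a 2 with hy0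
    set T : ℤ := max 0 (a + b + c - 4*(m+1) - y0) with hT
    set y1 : ℤ := min b T with hy1
    set y2 : ℤ := T - y1 with hy2
    have m0 := min_cases a 2
    have m1 := max_cases (0:ℤ) (a + b + c - 4*(m+1) - y0)
    have m2 := min_cases b T
    obtain ⟨g, hg, hga, hgb, hgc⟩ := ih (a - y0) (b - y1) (c - y2)
      (by omega) (by push_cast; omega) (by omega) (by omega) (by push_cast; omega)
    refine ⟨Fin.cons (y0, y1, y2) g, ?_, ?_, ?_, ?_⟩
    · intro i
      refine Fin.cases ?_ ?_ i
      · simp only [Fin.cons_zero, okQ]; omega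
      · intro j; simpa only [Fin.cons_succ] using hg j
    · rw [Fin.sum_univ_succ]; simp only [Fin.cons_zero, Fin.cons_succ]; omega
    · rw [Fin.sum_univ_succ]; simp only [Fin.cons_zero, Fin.cons_succ]; omega
    · rw [Fin.sum_univ_succ]; simp only [Fin.cons_zero, Fin.cons_succ]; omega

theorem aux_main16 :
    ({x : Fin 3 → ℝ | x ∈ interior (convexHull ℝ
        {![0,0,0], ![2,0,0], ![0,4,0], ![0,0,4], ![2,2,0], ![2,0,2]} :
        Set (Fin 3 → ℝ)) ∧ (∀ i, ∃ z : ℤ, x i = (z : ℝ))} = {![1,1,1]}) ∧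
    (∀ n : ℕ, 1 ≤ n → ∀ x ∈ (n : ℝ) • (convexHull ℝ
        {![0,0,0], ![2,0,0], ![0,4,0], ![0,0,4], ![2,2,0], ![2,0,2]} :
        Set (Fin 3 → ℝ)), (∀ i, ∃ z : ℤ, x i = (z : ℝ)) →
      ∃ f : Fin n → (Fin 3 → ℝ),
        (∀ i, f i ∈ (convexHull ℝ {![0,0,0], ![2,0,0], ![0,4,0], ![0,0,4], ![2,2,0], ![2,0,2]} :
          Set (Fin 3 → ℝ)) ∧ (∀ j, ∃ z : ℤ, f i j = (z : ℝ))) ∧ x = ∑ i, f i) := by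
  constructor
  · ext y
    simp only [Set.mem_setOf_eq, Set.mem_singleton_iff]
    constructor
    · rintro ⟨hin, hlat⟩
      rw [interior_Q] at hin
      obtain ⟨h1, h2, h3, h4, h5⟩ := hin
      obtain ⟨z0, hz0⟩ := hlat 0
      obtain ⟨z1, hz1⟩ := hlat 1
      obtain ⟨z2, hz2⟩ := hlat 2
      rw [hz0] at h1 h2; rw [hz1] at h3; rw [hz2] at h4
      rw [hz0, hz1, hz2] at h5
      have i1 : (0:ℤ) < z0 := by exact_mod_cast h1
      have i2 : z0 < 2 := by exact_mod_cast h2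
      have i3 : (0:ℤ) < z1 := by exact_mod_cast h3
      have i4 : (0:ℤ) < z2 := by exact_mod_cast h4
      have i5 : z0 + z1 + z2 < 4 := by exact_mod_cast h5
      have e : z0 = 1 ∧ z1 = 1 ∧ z2 = 1 := by omega
      funext j
      fin_cases j
      · show y 0 = ![(1:ℝ),1,1] 0; rw [hz0, e.1]; norm_num
      · show y 1 = ![(1:ℝ),1,1] 1; rw [hz1, e.2.1]; norm_num
      · show y 2 = ![(1:ℝ),1,1] 2; rw [hz2, e.2.2]; norm_num [Matrix.cons_val_two, Matrix.tail_cons, Matrix.head_cons]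
    · rintro rfl
      refine ⟨?_, ?_⟩
      · rw [interior_Q]
        refine ⟨?_, ?_, ?_, ?_, ?_⟩ <;> norm_num [Matrix.cons_val_two, Matrix.tail_cons, Matrix.head_cons]
      · intro i; exact ⟨1, by fin_cases i <;> norm_num⟩
  · intro n hn x hx hlat
    rw [Set.mem_smul_set] at hx
    obtain ⟨y, hy, rfl⟩ := hx
    obtain ⟨h1, h2, h3, h4, h5⟩ := Q_sub_H hy
    have happ : ∀ i, ((n:ℝ) • y) i = (n:ℝ) * y i := fun i => rfl
    obtain ⟨a, ha⟩ := hlat 0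
    obtain ⟨b, hb⟩ := hlat 1
    obtain ⟨c, hc⟩ := hlat 2
    rw [happ] at ha hb hc
    have hn0 : (0:ℝ) ≤ (n:ℝ) := Nat.cast_nonneg n
    obtain ⟨m, rfl⟩ : ∃ m, n = m + 1 := ⟨n - 1, by omega⟩
    have g1 : (0:ℤ) ≤ a := by
      have : (0:ℝ) ≤ (a:ℝ) := ha ▸ mul_nonneg hn0 h1
      exact_mod_cast this
    have g2 : a ≤ 2 * ((m:ℤ) + 1) := by
      have : (a:ℝ) ≤ 2 * ((m:ℝ) + 1) := by
        rw [← ha]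
        have := mul_le_mul_of_nonneg_left h2 hn0
        push_cast at this ⊢
        linarith
      exact_mod_cast this
    have g3 : (0:ℤ) ≤ b := by
      have : (0:ℝ) ≤ (b:ℝ) := hb ▸ mul_nonneg hn0 h3
      exact_mod_cast this
    have g4 : (0:ℤ) ≤ c := by
      have : (0:ℝ) ≤ (c:ℝ) := hc ▸ mul_nonneg hn0 h4
      exact_mod_cast this
    have g5 : a + b + c ≤ 4 * ((m:ℤ) + 1) := by
      have : (a:ℝ) + b + c ≤ 4 * ((m:ℝ) + 1) := by
        rw [← ha, ← hb, ← hc]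
        have := mul_le_mul_of_nonneg_left h5 hn0
        push_cast at this ⊢
        nlinarith
      exact_mod_cast this
    obtain ⟨f, hok, hsa, hsb, hsc⟩ := greedy m a b c g1 (by push_cast at g2 ⊢; omega) g3 g4
      (by push_cast at g5 ⊢; omega)
    refine ⟨fun i => ![((f i).1 : ℝ), ((f i).2.1 : ℝ), ((f i).2.2 : ℝ)], ?_, ?_⟩
    · intro i
      obtain ⟨o1, o2, o3, o4, o5⟩ := hok i
      constructor
      · apply H_sub_Q
        refine ⟨?_, ?_, ?_, ?_, ?_⟩
        · show (0:ℝ) ≤ ((f i).1 : ℝ); exact_mod_cast o1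
        · show ((f i).1 : ℝ) ≤ 2; exact_mod_cast o2
        · show (0:ℝ) ≤ ((f i).2.1 : ℝ); exact_mod_cast o3
        · show (0:ℝ) ≤ ((f i).2.2 : ℝ); exact_mod_cast o4
        · show ((f i).1 : ℝ) + ((f i).2.1 : ℝ) + ((f i).2.2 : ℝ) ≤ 4; exact_mod_cast o5
      · intro j
        fin_cases j
        · exact ⟨(f i).1, rfl⟩
        · exact ⟨(f i).2.1, rfl⟩
        · exact ⟨(f i).2.2, rfl⟩
    · funext j
      rw [Finset.sum_apply]
      fin_cases j
      · show ((m+1:ℕ):ℝ) * y 0 = ∑ i : Fin (m+1), ((f i).1 : ℝ)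
        rw [ha, ← hsa]
        push_cast
        rfl
      · show ((m+1:ℕ):ℝ) * y 1 = ∑ i : Fin (m+1), ((f i).2.1 : ℝ)
        rw [hb, ← hsb]
        push_cast
        rfl
      · show ((m+1:ℕ):ℝ) * y 2 = ∑ i : Fin (m+1), ((f i).2.2 : ℝ)
        rw [hc, ← hsc]
        push_cast
        rfl

/-- The anticanonical polytope of Fano class (3) has unique interior lattice point
(1,1,1) and is normal. -/
theorem stmt16 :
    ({x : Fin 3 → ℝ | x ∈ interior (convexHull ℝ
        {![0,0,0], ![2,0,0], ![0,4,0], ![0,0,4], ![2,2,0], ![2,0,2]} :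
        Set (Fin 3 → ℝ)) ∧ IsLatticePt x} = {![1,1,1]}) ∧
    IsNormalPolytope (convexHull ℝ
        {![0,0,0], ![2,0,0], ![0,4,0], ![0,0,4], ![2,2,0], ![2,0,2]} :
        Set (Fin 3 → ℝ)) := by
  exact ⟨aux_main16.1, aux_main16.2⟩
end

section
/- Normality of polytopes P = nP₁ with facet cuts of the blowup type: let n ≥ 1, 1 ≤ m ≤ n−1, and let P = nP₁ ∩ {z ≤ m} ∩ {x ≤ l₁} for m+1 ≤ l₁ ≤ n−1, assumed 3-dimensional with all vertices in ℤ³. Then P is normal. -/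
open scoped Pointwise

/- ### Auxiliary lemmas -/

lemma P1_eq : P1 = {x : Fin 3 → ℝ | 0 ≤ x 0 ∧ 0 ≤ x 1 ∧ 0 ≤ x 2 ∧ x 0 + x 1 + x 2 ≤ 1} := by
  apply Set.Subset.antisymm
  · apply convexHull_min
    · rintro v hv
      simp only [Set.mem_insert_iff, Set.mem_singleton_iff] at hv
      rcases hv with rfl | rfl | rfl | rfl <;> norm_num [Matrix.cons_val_two, Matrix.tail_cons, Matrix.head_cons]
    · rintro x ⟨hx0, hx1, hx2, hxs⟩ y ⟨hy0, hy1, hy2, hys⟩ a b ha hb hab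
      refine ⟨?_, ?_, ?_, ?_⟩ <;>
        simp only [Pi.add_apply, Pi.smul_apply, smul_eq_mul] <;> nlinarith
  · rintro x ⟨hx0, hx1, hx2, hxs⟩
    rw [P1, mem_convexHull_iff_exists_fintype]
    refine ⟨Fin 4, inferInstance, ![1 - (x 0 + x 1 + x 2), x 0, x 1, x 2],
      ![![0,0,0], ![1,0,0], ![0,1,0], ![0,0,1]], ?_, ?_, ?_, ?_⟩
    · intro i; fin_cases i <;> simp <;> linarith
    · simp [Fin.sum_univ_four]; ring
    · intro i; fin_cases i <;> simp [Set.mem_insert_iff]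
    · funext j
      simp only [Fin.sum_univ_four]
      fin_cases j <;> simp

lemma smul_halfspaces (c a b d : ℝ) (hc : 0 < c) :
    c • {x : Fin 3 → ℝ | 0 ≤ x 0 ∧ 0 ≤ x 1 ∧ 0 ≤ x 2 ∧ x 0 + x 1 + x 2 ≤ a ∧ x 2 ≤ b ∧ x 0 ≤ d}
      = {x : Fin 3 → ℝ | 0 ≤ x 0 ∧ 0 ≤ x 1 ∧ 0 ≤ x 2 ∧
          x 0 + x 1 + x 2 ≤ c * a ∧ x 2 ≤ c * b ∧ x 0 ≤ c * d} := by
  ext x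
  rw [Set.mem_smul_set_iff_inv_smul_mem₀ (ne_of_gt hc)]
  simp only [Set.mem_setOf_eq, Pi.smul_apply, smul_eq_mul]
  have h1 : (0:ℝ) < c⁻¹ := by positivity
  constructor
  · rintro ⟨u0, u1, u2, us, uz, ux⟩
    have e : c * c⁻¹ = 1 := mul_inv_cancel₀ (ne_of_gt hc)
    refine ⟨?_, ?_, ?_, ?_, ?_, ?_⟩ <;> nlinarith
  · rintro ⟨u0, u1, u2, us, uz, ux⟩
    have e : c * c⁻¹ = 1 := mul_inv_cancel₀ (ne_of_gt hc)
    refine ⟨?_, ?_, ?_, ?_, ?_, ?_⟩ <;> nlinarith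

lemma key_s18 (k n m l X0 X1 X2 : ℤ) (hk : 2 ≤ k) (hm : 1 ≤ m) (hl : m+1 ≤ l)
    (hln : l + 1 ≤ n)
    (h0 : 0 ≤ X0) (h1 : 0 ≤ X1) (h2 : 0 ≤ X2) (hs : X0+X1+X2 ≤ k*n)
    (hz : X2 ≤ k*m) (hx : X0 ≤ k*l) :
    ∃ p0 p1 p2 : ℤ, 0 ≤ p0 ∧ 0 ≤ p1 ∧ 0 ≤ p2 ∧ p0+p1+p2 ≤ n ∧ p2 ≤ m ∧ p0 ≤ l ∧
      p0 ≤ X0 ∧ p1 ≤ X1 ∧ p2 ≤ X2 ∧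
      X0+X1+X2-(p0+p1+p2) ≤ (k-1)*n ∧ X2-p2 ≤ (k-1)*m ∧ X0-p0 ≤ (k-1)*l := by
  have e1 : (k-1)*n = k*n - n := by ring
  have e2 : (k-1)*m = k*m - m := by ring
  have e3 : (k-1)*l = k*l - l := by ring
  have f1 : k*l - l ≤ k*n - n - (k-1) := by
    nlinarith [mul_nonneg (by linarith : (0:ℤ) ≤ k-1) (by linarith : (0:ℤ) ≤ n-1-l)]
  have f2 : k*m - m ≤ k*n - n - (k-1) := by
    nlinarith [mul_nonneg (by linarith : (0:ℤ) ≤ k-1) (by linarith : (0:ℤ) ≤ n-1-m)]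
  have f4 : l ≤ k*l := by nlinarith
  have f5 : m ≤ k*m := by nlinarith
  have f6 : n ≤ k*n := by nlinarith
  obtain ⟨i, hi1, hi2, hi3⟩ : ∃ i:ℤ, 0 ≤ i ∧ X0-(k*l-l) ≤ i ∧ (i = 0 ∨ i = X0-(k*l-l)) :=
    ⟨max 0 (X0-(k*l-l)), le_max_left _ _, le_max_right _ _, max_choice _ _⟩
  obtain ⟨j, hj1, hj2, hj3⟩ : ∃ j:ℤ, 0 ≤ j ∧ X2-(k*m-m) ≤ j ∧ (j = 0 ∨ j = X2-(k*m-m)) :=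
    ⟨max 0 (X2-(k*m-m)), le_max_left _ _, le_max_right _ _, max_choice _ _⟩
  obtain ⟨μ, hμ1, hμ2, hμ3⟩ : ∃ μ:ℤ, μ ≤ X2 ∧ μ ≤ m ∧ (μ = X2 ∨ μ = m) :=
    ⟨min X2 m, min_le_left _ _, min_le_right _ _, min_choice _ _⟩
  obtain ⟨t, ht1, ht2, ht3⟩ : ∃ t:ℤ, i+j ≤ t ∧ X0+X2-(k*n-n) ≤ t ∧
      (t = i+j ∨ t = X0+X2-(k*n-n)) :=
    ⟨max (i+j) (X0+X2-(k*n-n)), le_max_left _ _, le_max_right _ _, max_choice _ _⟩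
  obtain ⟨p0, hp1, hp2, hp3⟩ : ∃ p0:ℤ, i ≤ p0 ∧ t - μ ≤ p0 ∧ (p0 = i ∨ p0 = t - μ) :=
    ⟨max i (t-μ), le_max_left _ _, le_max_right _ _, max_choice _ _⟩
  obtain ⟨p1, hq1, hq2, hq3⟩ : ∃ p1:ℤ, 0 ≤ p1 ∧ X0+X1+X2-(k*n-n)-t ≤ p1 ∧
      (p1 = 0 ∨ p1 = X0+X1+X2-(k*n-n)-t) :=
    ⟨max 0 _, le_max_left _ _, le_max_right _ _, max_choice _ _⟩
  refine ⟨p0, p1, t - p0, ?_⟩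
  rw [e1, e2, e3]
  rcases le_or_gt (l+m) n with hc | hc
  · have f7 : k*l + k*m - l - m ≤ k*n - n := by
      nlinarith [mul_nonneg (by linarith : (0:ℤ) ≤ k-1) (by linarith : (0:ℤ) ≤ n-l-m)]
    omega
  · have f8 : k*n - n ≤ k*l - l + (k*m - m) := by
      nlinarith [mul_nonneg (by linarith : (0:ℤ) ≤ k-1) (by linarith : (0:ℤ) ≤ l+m-n)]
    omega

/-- The integer decomposition, by induction on `k`. -/
lemma decomp (n m l : ℤ) (hm : 1 ≤ m) (hl : m+1 ≤ l) (hln : l + 1 ≤ n) :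
    ∀ k : ℕ, 1 ≤ k → ∀ X : Fin 3 → ℤ,
      (0 ≤ X 0 ∧ 0 ≤ X 1 ∧ 0 ≤ X 2 ∧ X 0 + X 1 + X 2 ≤ (k:ℤ)*n ∧ X 2 ≤ (k:ℤ)*m ∧
        X 0 ≤ (k:ℤ)*l) →
      ∃ f : Fin k → (Fin 3 → ℤ),
        (∀ i, 0 ≤ f i 0 ∧ 0 ≤ f i 1 ∧ 0 ≤ f i 2 ∧ f i 0 + f i 1 + f i 2 ≤ n ∧
          f i 2 ≤ m ∧ f i 0 ≤ l) ∧ X = ∑ i, f i := by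
  intro k
  induction k with
  | zero => omega
  | succ k ih =>
    intro _ X ⟨h0, h1, h2, hs, hzc, hxc⟩
    rcases Nat.eq_zero_or_pos k with rfl | hk
    · push_cast at hs hzc hxc
      exact ⟨fun _ => X, fun i => ⟨h0, h1, h2, by linarith, by linarith, by linarith⟩,
        by simp⟩
    · have hk2 : (2:ℤ) ≤ (k:ℤ) + 1 := by exact_mod_cast Nat.succ_le_succ hk
      obtain ⟨p0, p1, p2, g0, g1, g2, gs, gz, gx, gX0, gX1, gX2, r1, r2, r3⟩ :=
        key_s18 ((k:ℤ)+1) n m l (X 0) (X 1) (X 2) hk2 hm hl hln h0 h1 h2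
          (by push_cast at hs ⊢; linarith) (by push_cast at hzc ⊢; linarith)
          (by push_cast at hxc ⊢; linarith)
      have hk1 : ((k:ℤ)+1) - 1 = (k:ℤ) := by ring
      rw [hk1] at r1 r2 r3
      obtain ⟨f, hf, hsum⟩ := ih hk ![X 0 - p0, X 1 - p1, X 2 - p2]
        (by refine ⟨?_, ?_, ?_, ?_, ?_, ?_⟩ <;> simp <;> omega)
      refine ⟨Fin.cons ![p0, p1, p2] f, ?_, ?_⟩
      · intro i
        refine Fin.cases ?_ ?_ i
        · simp; omega
        · intro i'; simpa using hf i'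
      · rw [Fin.sum_cons]
        funext j
        have := congrFun hsum j
        rw [Finset.sum_apply] at this
        fin_cases j <;> simp [Finset.sum_apply] at this ⊢ <;> omega
  
/-- Blowup-type truncations of dilated simplices are normal. -/
theorem stmt18 (n m l₁ : ℕ) (hn : 1 ≤ n) (hm : 1 ≤ m) (hmn : m ≤ n - 1)
    (hl : m + 1 ≤ l₁) (hln : l₁ ≤ n - 1)
    (hdim : (interior ((n : ℝ) • P1 ∩ {x | x 2 ≤ (m : ℝ)} ∩ {x | x 0 ≤ (l₁ : ℝ)})).Nonempty)
    (hlat : IsLatticePolytope ((n : ℝ) • P1 ∩ {x | x 2 ≤ (m : ℝ)} ∩ {x | x 0 ≤ (l₁ : ℝ)})) :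
    IsNormalPolytope ((n : ℝ) • P1 ∩ {x | x 2 ≤ (m : ℝ)} ∩ {x | x 0 ≤ (l₁ : ℝ)}) := by
  have hn' : (0:ℝ) < n := by exact_mod_cast hn
  -- description of P
  have hPdesc : (n : ℝ) • P1 ∩ {x | x 2 ≤ (m : ℝ)} ∩ {x | x 0 ≤ (l₁ : ℝ)} =
      {x : Fin 3 → ℝ | 0 ≤ x 0 ∧ 0 ≤ x 1 ∧ 0 ≤ x 2 ∧ x 0 + x 1 + x 2 ≤ (n:ℝ) ∧
        x 2 ≤ (m:ℝ) ∧ x 0 ≤ (l₁:ℝ)} := by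
    rw [P1_eq]
    ext x
    rw [Set.mem_inter_iff, Set.mem_inter_iff,
      Set.mem_smul_set_iff_inv_smul_mem₀ (ne_of_gt hn')]
    simp only [Set.mem_setOf_eq, Pi.smul_apply, smul_eq_mul]
    have h1 : (0:ℝ) < (n:ℝ)⁻¹ := by positivity
    have e : (n:ℝ) * (n:ℝ)⁻¹ = 1 := mul_inv_cancel₀ (ne_of_gt hn')
    constructor
    · rintro ⟨⟨⟨u0, u1, u2, us⟩, uz⟩, ux⟩
      refine ⟨?_, ?_, ?_, ?_, uz, ux⟩ <;> nlinarith
    · rintro ⟨u0, u1, u2, us, uz, ux⟩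
      refine ⟨⟨⟨?_, ?_, ?_, ?_⟩, uz⟩, ux⟩ <;> nlinarith
  rw [hPdesc]
  intro k hk x hx hlatx
  have hk' : (0:ℝ) < k := by exact_mod_cast hk
  rw [smul_halfspaces _ _ _ _ hk'] at hx
  obtain ⟨u0, u1, u2, us, uz, ux⟩ := hx
  -- extract integer coordinates
  obtain ⟨z0, hz0⟩ := hlatx 0
  obtain ⟨z1, hz1⟩ := hlatx 1
  obtain ⟨z2, hz2⟩ := hlatx 2
  have hmz : (1:ℤ) ≤ (m:ℤ) := by exact_mod_cast hm
  have hlz : (m:ℤ) + 1 ≤ (l₁:ℤ) := by exact_mod_cast hl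
  have hlnz : (l₁:ℤ) + 1 ≤ (n:ℤ) := by
    have : l₁ + 1 ≤ n := by omega
    exact_mod_cast this
  obtain ⟨f, hf, hsum⟩ := decomp (n:ℤ) (m:ℤ) (l₁:ℤ) hmz hlz hlnz k hk ![z0, z1, z2]
    (by
      refine ⟨?_, ?_, ?_, ?_, ?_, ?_⟩ <;> simp only [Matrix.cons_val_zero,
        Matrix.cons_val_one, Matrix.head_cons, Matrix.cons_val_two, Matrix.tail_cons]
      · exact_mod_cast hz0 ▸ u0
      · exact_mod_cast hz1 ▸ u1
      · exact_mod_cast hz2 ▸ u2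
      · have : (z0:ℝ) + z1 + z2 ≤ (k:ℝ) * n := by rw [← hz0, ← hz1, ← hz2]; exact us
        exact_mod_cast this
      · have : (z2:ℝ) ≤ (k:ℝ) * m := by rw [← hz2]; exact uz
        exact_mod_cast this
      · have : (z0:ℝ) ≤ (k:ℝ) * l₁ := by rw [← hz0]; exact ux
        exact_mod_cast this)
  refine ⟨fun i => fun j => ((f i j : ℤ) : ℝ), fun i => ⟨?_, fun j => ⟨f i j, rfl⟩⟩, ?_⟩
  · obtain ⟨a0, a1, a2, as, az, ax⟩ := hf i
    refine ⟨?_, ?_, ?_, ?_, ?_, ?_⟩ <;> beta_reduce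
    · exact_mod_cast a0
    · exact_mod_cast a1
    · exact_mod_cast a2
    · exact_mod_cast as
    · exact_mod_cast az
    · exact_mod_cast ax
  · funext j
    have hXj : x j = ((![z0, z1, z2] j : ℤ) : ℝ) := by
      fin_cases j <;> simp [hz0, hz1, hz2]
    rw [hXj, congrFun hsum j]
    push_cast
    simp [Finset.sum_apply]
end
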